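/- Let ω₁, ω₂, ω₃ be the standard self-dual 2-forms on ℝ⁴, namely ω₁ = e¹∧e² + e³∧e⁴, ω₂ = e¹∧e³ − e²∧e⁴, ω₃ = −e¹∧e⁴ − e²∧e³, regarded as alternating bilinear forms on ℝ⁴. Suppose θ₁, θ₂, θ₃ are linearly independent elements of the linear span of {ω₁, ω₂, ω₃}, and A₁, A₂, A₃ ∈ ℝ⁴ are vectors such that for all i, j ∈ {1,2,3} and all v ∈ ℝ⁴ one has θ_j(A_i, v) = θ_i(A_j, v). Then A₁ = A₂ = A₃ = 0. -/

import Mathlib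

open Matrix
open Quaternion

/-- The standard self-dual 2-form `ω₁ = e¹∧e² + e³∧e⁴` on `ℝ⁴`, as the antisymmetric matrix
of the bilinear form `(u,v) ↦ u ⬝ᵥ ω₁ *ᵥ v`. -/
def selfDualOmega1 : Matrix (Fin 4) (Fin 4) ℝ :=
  !![0, 1, 0, 0; -1, 0, 0, 0; 0, 0, 0, 1; 0, 0, -1, 0]

/-- The standard self-dual 2-form `ω₂ = e¹∧e³ − e²∧e⁴` on `ℝ⁴`. -/
def selfDualOmega2 : Matrix (Fin 4) (Fin 4) ℝ :=
  !![0, 0, 1, 0; 0, 0, 0, -1; -1, 0, 0, 0; 0, 1, 0, 0]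

/-- The standard self-dual 2-form `ω₃ = −e¹∧e⁴ − e²∧e³` on `ℝ⁴`. -/
def selfDualOmega3 : Matrix (Fin 4) (Fin 4) ℝ :=
  !![0, 0, 0, -1; 0, 0, -1, 0; 0, 1, 0, 0; 1, 0, 0, 0]

/-- Identification of `ℝ⁴` with the quaternions. -/
noncomputable def phiQ (A : Fin 4 → ℝ) : ℍ[ℝ] := ⟨A 0, A 1, A 2, A 3⟩

/-- The imaginary quaternion associated to a coefficient vector for `ω₁, ω₂, ω₃`. -/
noncomputable def qQ (c : Fin 3 → ℝ) : ℍ[ℝ] := ⟨0, c 0, c 1, -(c 2)⟩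

lemma key_mul (c : Fin 3 → ℝ) (A : Fin 4 → ℝ) :
    phiQ (Matrix.vecMul A (c 0 • selfDualOmega1 + c 1 • selfDualOmega2 + c 2 • selfDualOmega3))
      = qQ c * phiQ A := by
  apply QuaternionAlgebra.ext <;>
    simp only [Quaternion.re_mul, Quaternion.imI_mul, Quaternion.imJ_mul, Quaternion.imK_mul] <;>
    simp [phiQ, qQ, Quaternion.re_mul, Quaternion.imI_mul, Quaternion.imJ_mul, Quaternion.imK_mul,
      Matrix.vecMul, dotProduct, Fin.sum_univ_four,
      selfDualOmega1, selfDualOmega2, selfDualOmega3, Matrix.vecHead, Matrix.vecTail] <;> ring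

lemma det_lemma (c : Fin 3 → Fin 3 → ℝ) :
    qQ (c 2) * qQ (c 0) * qQ (c 1) - qQ (c 1) * qQ (c 0) * qQ (c 2)
      = (((2 * (Matrix.of c).det : ℝ)) : ℍ[ℝ]) := by
  apply QuaternionAlgebra.ext <;>
    simp only [Quaternion.re_sub, Quaternion.imI_sub, Quaternion.imJ_sub, Quaternion.imK_sub, Quaternion.re_mul, Quaternion.imI_mul, Quaternion.imJ_mul, Quaternion.imK_mul] <;>
    simp [qQ, Quaternion.re_mul, Quaternion.imI_mul, Quaternion.imJ_mul, Quaternion.imK_mul,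
      Matrix.det_fin_three] <;> ring

lemma phiQ_eq_zero {A : Fin 4 → ℝ} (h : phiQ A = 0) : A = 0 := by
  rw [Quaternion.ext_iff] at h
  simp only [phiQ] at h
  obtain ⟨h0, h1, h2, h3⟩ := h
  funext x
  fin_cases x <;> simpa

lemma qQ_ne_zero {c : Fin 3 → ℝ} (h : c ≠ 0) : qQ c ≠ 0 := by
  intro hq
  apply h
  funext k
  fin_cases k
  · simpa [qQ] using congrArg QuaternionAlgebra.imI hq
  · simpa [qQ] using congrArg QuaternionAlgebra.imJ hq
  · simpa [qQ, neg_eq_zero] using congrArg QuaternionAlgebra.imK hq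

lemma star_qQ (c : Fin 3 → ℝ) : star (qQ c) = - qQ c := by
  apply QuaternionAlgebra.ext <;> simp only [Quaternion.re_star, Quaternion.imI_star, Quaternion.imJ_star, Quaternion.imK_star, Quaternion.re_neg, Quaternion.imI_neg, Quaternion.imJ_neg, Quaternion.imK_neg] <;> simp [qQ]

/-- If `θ₁, θ₂, θ₃` are linearly independent elements of the span of the standard self-dual
2-forms on `ℝ⁴` and `A₁, A₂, A₃ ∈ ℝ⁴` satisfy `ι_{A_i}θ_j = ι_{A_j}θ_i` for all `i, j`,
then `A₁ = A₂ = A₃ = 0`. -/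
theorem eq_zero_of_contraction_symm_selfDual
    (θ : Fin 3 → Matrix (Fin 4) (Fin 4) ℝ)
    (hspan : ∀ i, θ i ∈ Submodule.span ℝ
      ({selfDualOmega1, selfDualOmega2, selfDualOmega3} : Set (Matrix (Fin 4) (Fin 4) ℝ)))
    (hindep : LinearIndependent ℝ θ)
    (A : Fin 3 → (Fin 4 → ℝ))
    (hsym : ∀ (i j : Fin 3) (v : Fin 4 → ℝ),
      A i ⬝ᵥ (θ j).mulVec v = A j ⬝ᵥ (θ i).mulVec v) :
    ∀ i, A i = 0 := by
  classical
  -- extract coefficients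
  have hex : ∀ i, ∃ cc : Fin 3 → ℝ,
      θ i = cc 0 • selfDualOmega1 + cc 1 • selfDualOmega2 + cc 2 • selfDualOmega3 := by
    intro i
    rcases Submodule.mem_span_insert.mp (hspan i) with ⟨a, z, hz, hzeq⟩
    rcases Submodule.mem_span_pair.mp hz with ⟨m, n, hmn⟩
    refine ⟨![a, m, n], ?_⟩
    simp only [Matrix.cons_val_zero, Matrix.cons_val_one, Matrix.head_cons,
      Matrix.cons_val_two, Matrix.tail_cons]
    rw [hzeq, ← hmn, add_assoc]
  choose c hθ using hex
  -- vecMul version of the symmetry hypothesis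
  have hv : ∀ i j, Matrix.vecMul (A i) (θ j) = Matrix.vecMul (A j) (θ i) := by
    intro i j
    funext b
    have h := hsym i j (Pi.single b 1)
    rw [Matrix.dotProduct_mulVec, Matrix.dotProduct_mulVec] at h
    simpa [dotProduct_single] using h
  -- quaternionic version
  have hq : ∀ i j, qQ (c j) * phiQ (A i) = qQ (c i) * phiQ (A j) := by
    intro i j
    rw [← key_mul (c j) (A i), ← key_mul (c i) (A j), ← hθ, ← hθ, hv]
  -- the coefficient vectors are linearly independent
  have hc : LinearIndependent ℝ c := by
    rw [Fintype.linearIndependent_iff] at hindep ⊢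
    intro g hg
    have hgk : ∀ k, ∑ i, g i * c i k = 0 := by
      intro k
      have := congrFun hg k
      simpa [Finset.sum_apply] using this
    apply hindep
    have key : ∑ i, g i • θ i
        = (∑ i, g i * c i 0) • selfDualOmega1 + (∑ i, g i * c i 1) • selfDualOmega2
          + (∑ i, g i * c i 2) • selfDualOmega3 := by
      simp only [Fin.sum_univ_three, hθ]
      module
    rw [key, hgk 0, hgk 1, hgk 2]
    simp
  have hdet : (Matrix.of c).det ≠ 0 := by
    have : IsUnit (Matrix.of c) := Matrix.linearIndependent_rows_iff_isUnit.mp hc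
    have := (Matrix.isUnit_iff_isUnit_det _).mp this
    exact this.ne_zero
  -- q1 is nonzero
  have hc0 : c 0 ≠ 0 := hc.ne_zero 0
  have hq1 : qQ (c 0) ≠ 0 := qQ_ne_zero hc0
  set q1 := qQ (c 0) with hq1d
  set q2 := qQ (c 1)
  set q3 := qQ (c 2)
  set a1 := phiQ (A 0)
  set a2 := phiQ (A 1)
  set a3 := phiQ (A 2)
  have e12 : q2 * a1 = q1 * a2 := hq 0 1
  have e13 : q3 * a1 = q1 * a3 := hq 0 2
  have e23 : q3 * a2 = q2 * a3 := hq 1 2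
  have ha2 : a2 = q1⁻¹ * (q2 * a1) := by
    rw [e12, ← mul_assoc, inv_mul_cancel₀ hq1, one_mul]
  have ha3 : a3 = q1⁻¹ * (q3 * a1) := by
    rw [e13, ← mul_assoc, inv_mul_cancel₀ hq1, one_mul]
  -- rewrite the inverse
  have hinv : q1⁻¹ = ((Quaternion.normSq q1)⁻¹ : ℝ) • (-q1) := by
    rw [Quaternion.inv_def, hq1d, star_qQ]
  have hns : (Quaternion.normSq q1 : ℝ) ≠ 0 := by
    simpa [Quaternion.normSq_eq_zero] using hq1
  have hmain : q3 * (q1 * (q2 * a1)) = q2 * (q1 * (q3 * a1)) := by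
    have h := e23
    rw [ha2, ha3, hinv] at h
    have h' : ((Quaternion.normSq q1)⁻¹ : ℝ) • (q3 * (-q1 * (q2 * a1)))
        = ((Quaternion.normSq q1)⁻¹ : ℝ) • (q2 * (-q1 * (q3 * a1))) := by
      simpa [smul_mul_assoc, mul_smul_comm] using h
    have h'' := smul_right_injective ℍ[ℝ] (inv_ne_zero hns) h'
    simpa [neg_mul, mul_neg, neg_inj] using h''
  have hzero : ((2 * (Matrix.of c).det : ℝ) : ℍ[ℝ]) * a1 = 0 := by
    rw [← det_lemma c, sub_mul, sub_eq_zero]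
    simp only [mul_assoc]
    exact hmain
  have hcoe : ((2 * (Matrix.of c).det : ℝ) : ℍ[ℝ]) ≠ 0 := by
    intro h
    exact mul_ne_zero two_ne_zero hdet (Quaternion.coe_injective (by simpa using h))
  have ha1 : a1 = 0 := by
    rcases mul_eq_zero.mp hzero with h | h
    · exact absurd h hcoe
    · exact h
  have ha2' : a2 = 0 := by rw [ha2, ha1]; simp
  have ha3' : a3 = 0 := by rw [ha3, ha1]; simp
  intro i
  fin_cases i
  · exact phiQ_eq_zero ha1
  · exact phiQ_eq_zero ha2'
  · exact phiQ_eq_zero ha3'
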